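/- Let B be a Hermitian (ν+1)×(ν+1) matrix written in block form B = [[A, y],[y*, a]] with A a Hermitian ν×ν matrix, y ∈ ℂ^ν and a ∈ ℝ. Then the eigenvalues interlace: λ_k(B) ≤ λ_k(A) ≤ λ_{k+1}(B) for all k = 1,…,ν. -/

import Mathlib

open Matrix BigOperators

/-- The eigenvalues of a Hermitian matrix, sorted in nondecreasing order. -/
noncomputable def sortedEig {ν : ℕ} {A : Matrix (Fin ν) (Fin ν) ℂ}
    (hA : A.IsHermitian) : Fin ν → ℝ :=
  hA.eigenvalues ∘ Tuple.sort hA.eigenvalues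

section Helpers

open Submodule Module

variable {n : ℕ}

private lemma toEuclideanLin_eigen {M : Matrix (Fin n) (Fin n) ℂ} (hM : M.IsHermitian)
    (i : Fin n) :
    Matrix.toEuclideanLin M (hM.eigenvectorBasis i) =
      (hM.eigenvalues i : ℂ) • hM.eigenvectorBasis i := by
  have h := hM.mulVec_eigenvectorBasis i
  rw [Matrix.toEuclideanLin_apply]
  apply (WithLp.equiv 2 (Fin n → ℂ)).injective
  simpa using h

private lemma quad_eq {M : Matrix (Fin n) (Fin n) ℂ} (hM : M.IsHermitian)
    (x : EuclideanSpace ℂ (Fin n)) :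
    inner ℂ x (Matrix.toEuclideanLin M x) =
      ((∑ i, hM.eigenvalues i * ‖hM.eigenvectorBasis.repr x i‖ ^ 2 : ℝ) : ℂ) := by
  set b := hM.eigenvectorBasis
  have hx : ∑ i, b.repr x i • b i = x := b.sum_repr x
  calc inner ℂ x (Matrix.toEuclideanLin M x)
      = inner ℂ x (Matrix.toEuclideanLin M (∑ i, b.repr x i • b i)) := by rw [hx]
    _ = ∑ i, (b.repr x i) * ((hM.eigenvalues i : ℂ) * inner ℂ x (b i)) := by
        rw [map_sum, inner_sum]
        refine Finset.sum_congr rfl fun i _ => ?_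
        rw [_root_.map_smul, toEuclideanLin_eigen hM i, inner_smul_right, inner_smul_right]
    _ = ∑ i, ((hM.eigenvalues i * ‖b.repr x i‖ ^ 2 : ℝ) : ℂ) := by
        refine Finset.sum_congr rfl fun i _ => ?_
        have h1 : inner ℂ x (b i) = (starRingEnd ℂ) (b.repr x i) := by
          rw [b.repr_apply_apply, inner_conj_symm]
        rw [h1, show b.repr x i * ((hM.eigenvalues i : ℂ) * (starRingEnd ℂ) (b.repr x i)) =
          (hM.eigenvalues i : ℂ) * (b.repr x i * (starRingEnd ℂ) (b.repr x i)) from by ring,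
          Complex.mul_conj']
        push_cast
        ring
    _ = _ := by push_cast; ring_nf

private lemma norm_sq_eq_sum_repr (b : OrthonormalBasis (Fin n) ℂ (EuclideanSpace ℂ (Fin n)))
    (x : EuclideanSpace ℂ (Fin n)) : ‖x‖ ^ 2 = ∑ i, ‖b.repr x i‖ ^ 2 := by
  rw [← b.repr.norm_map x, EuclideanSpace.norm_eq, Real.sq_sqrt (by positivity)]

private lemma repr_eq_zero_of_mem_span (b : OrthonormalBasis (Fin n) ℂ (EuclideanSpace ℂ (Fin n)))
    {S : Finset (Fin n)} {x : EuclideanSpace ℂ (Fin n)}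
    (hx : x ∈ span ℂ (⇑b '' ↑S)) {i : Fin n} (hi : i ∉ S) : b.repr x i = 0 := by
  rw [← b.coe_toBasis] at hx
  have := (b.toBasis.mem_span_image).mp hx
  rw [← b.coe_toBasis_repr_apply]
  by_contra h
  exact hi (this (Finsupp.mem_support_iff.mpr h))

private lemma quad_lower (b : OrthonormalBasis (Fin n) ℂ (EuclideanSpace ℂ (Fin n)))
    (μ : Fin n → ℝ) {S : Finset (Fin n)} {x : EuclideanSpace ℂ (Fin n)} {c : ℝ}
    (hc : ∀ i ∈ S, c ≤ μ i) (hx : x ∈ span ℂ (⇑b '' ↑S)) :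
    c * ‖x‖ ^ 2 ≤ ∑ i, μ i * ‖b.repr x i‖ ^ 2 := by
  rw [norm_sq_eq_sum_repr b, Finset.mul_sum]
  refine Finset.sum_le_sum fun i _ => ?_
  by_cases hi : i ∈ S
  · exact mul_le_mul_of_nonneg_right (hc i hi) (by positivity)
  · rw [repr_eq_zero_of_mem_span b hx hi]; simp

private lemma quad_upper (b : OrthonormalBasis (Fin n) ℂ (EuclideanSpace ℂ (Fin n)))
    (μ : Fin n → ℝ) {S : Finset (Fin n)} {x : EuclideanSpace ℂ (Fin n)} {c : ℝ}
    (hc : ∀ i ∈ S, μ i ≤ c) (hx : x ∈ span ℂ (⇑b '' ↑S)) :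
    ∑ i, μ i * ‖b.repr x i‖ ^ 2 ≤ c * ‖x‖ ^ 2 := by
  rw [norm_sq_eq_sum_repr b, Finset.mul_sum]
  refine Finset.sum_le_sum fun i _ => ?_
  by_cases hi : i ∈ S
  · exact mul_le_mul_of_nonneg_right (hc i hi) (by positivity)
  · rw [repr_eq_zero_of_mem_span b hx hi]; simp

private lemma finrank_span_image_finset {E : Type*} [AddCommGroup E] [Module ℂ E]
    {v : Fin n → E} (hv : LinearIndependent ℂ v) (S : Finset (Fin n)) :
    finrank ℂ (span ℂ (v '' ↑S)) = S.card := by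
  have h : v '' ↑S = Set.range (v ∘ (Subtype.val : ↥S → Fin n)) := by
    rw [Set.range_comp, Subtype.range_coe]
  rw [h, finrank_span_eq_card (hv.comp (Subtype.val : ↥S → Fin n) Subtype.val_injective)]
  simp

private lemma exists_ne_zero_mem_both {E : Type*} [AddCommGroup E] [Module ℂ E]
    [FiniteDimensional ℂ E] (U W : Submodule ℂ E)
    (h : finrank ℂ E < finrank ℂ U + finrank ℂ W) :
    ∃ x, x ≠ 0 ∧ x ∈ U ∧ x ∈ W := by
  have h2 := Submodule.finrank_sup_add_finrank_inf_eq U W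
  have h3 : finrank ℂ ↥(U ⊔ W) ≤ finrank ℂ E := Submodule.finrank_le _
  have h4 : 0 < finrank ℂ ↥(U ⊓ W) := by omega
  have h5 : U ⊓ W ≠ ⊥ := by
    intro hbot
    rw [hbot, finrank_bot] at h4; omega
  obtain ⟨x, hx, hx0⟩ := Submodule.exists_mem_ne_zero_of_ne_bot h5
  exact ⟨x, hx0, hx.1, hx.2⟩

/-- Extension by a zero last coordinate, as a linear map. -/
noncomputable def padL (ν : ℕ) :
    EuclideanSpace ℂ (Fin ν) →ₗ[ℂ] EuclideanSpace ℂ (Fin (ν + 1)) where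
  toFun v := WithLp.toLp 2 (Fin.snoc v 0 : Fin (ν + 1) → ℂ)
  map_add' u v := by
    ext i
    refine Fin.lastCases ?_ (fun j => ?_) i <;>
      simp [Fin.snoc_last, Fin.snoc_castSucc]
  map_smul' c v := by
    ext i
    refine Fin.lastCases ?_ (fun j => ?_) i <;>
      simp [Fin.snoc_last, Fin.snoc_castSucc]

private lemma padL_apply_castSucc {ν : ℕ} (v : EuclideanSpace ℂ (Fin ν)) (i : Fin ν) :
    padL ν v i.castSucc = v i := by
  show (Fin.snoc v 0 : Fin (ν+1) → ℂ) i.castSucc = v i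
  simp

private lemma padL_apply_last {ν : ℕ} (v : EuclideanSpace ℂ (Fin ν)) :
    padL ν v (Fin.last ν) = 0 := by
  show (Fin.snoc v 0 : Fin (ν+1) → ℂ) (Fin.last ν) = 0
  simp

private lemma padL_ker {ν : ℕ} : LinearMap.ker (padL ν) = ⊥ := by
  rw [LinearMap.ker_eq_bot]
  intro u v h
  ext i
  have := congrFun (congrArg (fun w : EuclideanSpace ℂ (Fin (ν+1)) =>
    (w : Fin (ν+1) → ℂ)) h) i.castSucc
  simpa [padL_apply_castSucc] using this

private lemma padL_norm {ν : ℕ} (v : EuclideanSpace ℂ (Fin ν)) : ‖padL ν v‖ = ‖v‖ := by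
  rw [EuclideanSpace.norm_eq, EuclideanSpace.norm_eq]
  congr 1
  rw [Fin.sum_univ_castSucc]
  simp [padL_apply_castSucc, padL_apply_last]

private lemma padL_quad {ν : ℕ} (Bm : Matrix (Fin (ν+1)) (Fin (ν+1)) ℂ)
    (Am : Matrix (Fin ν) (Fin ν) ℂ)
    (hblock : ∀ i j : Fin ν, Bm i.castSucc j.castSucc = Am i j)
    (v : EuclideanSpace ℂ (Fin ν)) :
    inner ℂ (padL ν v) (Matrix.toEuclideanLin Bm (padL ν v)) =
      (inner ℂ v (Matrix.toEuclideanLin Am v) : ℂ) := by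
  rw [EuclideanSpace.inner_eq_star_dotProduct, EuclideanSpace.inner_eq_star_dotProduct]
  rw [Matrix.toEuclideanLin_apply, Matrix.toEuclideanLin_apply]
  simp only [WithLp.ofLp_toLp]
  set w : Fin (ν+1) → ℂ := (padL ν v).ofLp with hw
  have hwc : ∀ i : Fin ν, w i.castSucc = v.ofLp i := fun i => padL_apply_castSucc v i
  have hwl : w (Fin.last ν) = 0 := padL_apply_last v
  show dotProduct (Bm *ᵥ w) (star w) = _
  rw [dotProduct, dotProduct, Fin.sum_univ_castSucc]
  have hlast : (Bm *ᵥ w) (Fin.last ν) * star w (Fin.last ν) = 0 := by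
    simp [Pi.star_apply, hwl]
  rw [hlast, add_zero]
  refine Finset.sum_congr rfl fun i _ => ?_
  have hmul : (Bm *ᵥ w) i.castSucc = (Am *ᵥ v.ofLp) i := by
    rw [Matrix.mulVec, Matrix.mulVec, dotProduct, dotProduct,
      Fin.sum_univ_castSucc]
    simp [hwl, hwc, hblock]
  rw [hmul]
  simp [Pi.star_apply, hwc]

end Helpers

/-- Cauchy interlacing for a bordered Hermitian matrix
`B = [[A, y],[y*, a]]`: `λ_k(B) ≤ λ_k(A) ≤ λ_{k+1}(B)`. -/
theorem bordered_hermitian_interlacing {ν : ℕ}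
    (A : Matrix (Fin ν) (Fin ν) ℂ) (hA : A.IsHermitian)
    (y : Fin ν → ℂ) (a : ℝ)
    (B : Matrix (Fin (ν + 1)) (Fin (ν + 1)) ℂ)
    (hBdef : B = Matrix.reindex finSumFinEquiv finSumFinEquiv
      (Matrix.fromBlocks A (Matrix.of fun i (_ : Fin 1) => y i)
        (Matrix.of fun (_ : Fin 1) j => star (y j))
        (Matrix.of fun (_ : Fin 1) (_ : Fin 1) => (a : ℂ))))
    (hB : B.IsHermitian) (k : Fin ν) :
    sortedEig hB k.castSucc ≤ sortedEig hA k ∧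
      sortedEig hA k ≤ sortedEig hB k.succ := by
  classical
  open Submodule Module in
  have hblock : ∀ i j : Fin ν, B i.castSucc j.castSucc = A i j := by
    intro i j
    subst hBdef
    have h1 : finSumFinEquiv.symm (i.castSucc) = (Sum.inl i : Fin ν ⊕ Fin 1) :=
      finSumFinEquiv_symm_apply_castAdd i
    have h2 : finSumFinEquiv.symm (j.castSucc) = (Sum.inl j : Fin ν ⊕ Fin 1) :=
      finSumFinEquiv_symm_apply_castAdd j
    rw [Matrix.reindex_apply, Matrix.submatrix_apply, h1, h2]
    rfl
  set μA := hA.eigenvalues with hμA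
  set μB := hB.eigenvalues with hμB
  set bA := hA.eigenvectorBasis with hbA
  set bB := hB.eigenvectorBasis with hbB
  set σA := Tuple.sort μA with hσA
  set σB := Tuple.sort μB with hσB
  have hkν : (k : ℕ) < ν := k.isLt
  have hlinA : LinearIndependent ℂ (fun i => padL ν (bA i)) :=
    (bA.orthonormal.linearIndependent).map' (padL ν) padL_ker
  have hlinB : LinearIndependent ℂ (⇑bB) := bB.orthonormal.linearIndependent
  have hrankE : finrank ℂ (EuclideanSpace ℂ (Fin (ν+1))) = ν + 1 := by simp
  -- a generic step combining everything
  constructor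
  · -- sortedEig hB k.castSucc ≤ sortedEig hA k
    set SA : Finset (Fin ν) := (Finset.Iic k).image σA with hSA
    set SB : Finset (Fin (ν+1)) := (Finset.Ici k.castSucc).image σB with hSB
    have hcardA : SA.card = (k : ℕ) + 1 := by
      rw [hSA, Finset.card_image_of_injective _ σA.injective, Fin.card_Iic]
    have hcardB : SB.card = ν + 1 - (k : ℕ) := by
      rw [hSB, Finset.card_image_of_injective _ σB.injective, Fin.card_Ici]
      simp
    set V : Submodule ℂ (EuclideanSpace ℂ (Fin (ν+1))) :=
      span ℂ ((fun i => padL ν (bA i)) '' ↑SA) with hV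
    set U : Submodule ℂ (EuclideanSpace ℂ (Fin (ν+1))) := span ℂ (⇑bB '' ↑SB) with hU
    have hVrank : finrank ℂ V = (k : ℕ) + 1 := by
      rw [hV, finrank_span_image_finset hlinA, hcardA]
    have hUrank : finrank ℂ U = ν + 1 - (k : ℕ) := by
      rw [hU, finrank_span_image_finset hlinB, hcardB]
    obtain ⟨x, hx0, hxV, hxU⟩ := exists_ne_zero_mem_both V U (by
      rw [hrankE, hVrank, hUrank]; omega)
    -- extract the preimage
    have himg : (fun i => padL ν (bA i)) '' ↑SA = ⇑(padL ν) '' (⇑bA '' ↑SA) :=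
      (Set.image_image (⇑(padL ν)) (⇑bA) (↑SA)).symm
    rw [hV, himg, ← Submodule.map_span] at hxV
    obtain ⟨v, hv, hvx⟩ := hxV
    have hv0 : v ≠ 0 := by
      rintro rfl
      rw [map_zero] at hvx
      exact hx0 hvx.symm
    have hQBx := quad_eq hB x
    have hQAv := quad_eq hA v
    have htrans := padL_quad B A hblock v
    rw [hvx] at htrans
    rw [hQBx, hQAv] at htrans
    have hQeq : (∑ i, μB i * ‖bB.repr x i‖ ^ 2) = ∑ i, μA i * ‖bA.repr v i‖ ^ 2 :=
      Complex.ofReal_inj.mp htrans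
    have hboundB : ∀ i ∈ SB, sortedEig hB k.castSucc ≤ μB i := by
      intro i hi
      obtain ⟨j, hj, rfl⟩ := Finset.mem_image.mp hi
      exact Tuple.monotone_sort μB (Finset.mem_Ici.mp hj)
    have hboundA : ∀ i ∈ SA, μA i ≤ sortedEig hA k := by
      intro i hi
      obtain ⟨j, hj, rfl⟩ := Finset.mem_image.mp hi
      exact Tuple.monotone_sort μA (Finset.mem_Iic.mp hj)
    have hlow := quad_lower bB μB hboundB hxU
    have hup := quad_upper bA μA hboundA hv
    have hnorm : ‖x‖ = ‖v‖ := by rw [← hvx, padL_norm]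
    have hfinal : sortedEig hB k.castSucc * ‖v‖ ^ 2 ≤ sortedEig hA k * ‖v‖ ^ 2 := by
      rw [← hnorm]
      calc sortedEig hB k.castSucc * ‖x‖ ^ 2 ≤ ∑ i, μB i * ‖bB.repr x i‖ ^ 2 := hlow
        _ = ∑ i, μA i * ‖bA.repr v i‖ ^ 2 := hQeq
        _ ≤ sortedEig hA k * ‖v‖ ^ 2 := hup
        _ = sortedEig hA k * ‖x‖ ^ 2 := by rw [hnorm]
    exact le_of_mul_le_mul_right hfinal (pow_pos (norm_pos_iff.mpr hv0) 2)
  · -- sortedEig hA k ≤ sortedEig hB k.succ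
    set SA : Finset (Fin ν) := (Finset.Ici k).image σA with hSA
    set SB : Finset (Fin (ν+1)) := (Finset.Iic k.succ).image σB with hSB
    have hcardA : SA.card = ν - (k : ℕ) := by
      rw [hSA, Finset.card_image_of_injective _ σA.injective, Fin.card_Ici]
    have hcardB : SB.card = (k : ℕ) + 2 := by
      rw [hSB, Finset.card_image_of_injective _ σB.injective, Fin.card_Iic]
      simp
    set V : Submodule ℂ (EuclideanSpace ℂ (Fin (ν+1))) :=
      span ℂ ((fun i => padL ν (bA i)) '' ↑SA) with hV
    set U : Submodule ℂ (EuclideanSpace ℂ (Fin (ν+1))) := span ℂ (⇑bB '' ↑SB) with hU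
    have hVrank : finrank ℂ V = ν - (k : ℕ) := by
      rw [hV, finrank_span_image_finset hlinA, hcardA]
    have hUrank : finrank ℂ U = (k : ℕ) + 2 := by
      rw [hU, finrank_span_image_finset hlinB, hcardB]
    obtain ⟨x, hx0, hxV, hxU⟩ := exists_ne_zero_mem_both V U (by
      rw [hrankE, hVrank, hUrank]; omega)
    have himg : (fun i => padL ν (bA i)) '' ↑SA = ⇑(padL ν) '' (⇑bA '' ↑SA) :=
      (Set.image_image (⇑(padL ν)) (⇑bA) (↑SA)).symm
    rw [hV, himg, ← Submodule.map_span] at hxV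
    obtain ⟨v, hv, hvx⟩ := hxV
    have hv0 : v ≠ 0 := by
      rintro rfl
      rw [map_zero] at hvx
      exact hx0 hvx.symm
    have hQBx := quad_eq hB x
    have hQAv := quad_eq hA v
    have htrans := padL_quad B A hblock v
    rw [hvx] at htrans
    rw [hQBx, hQAv] at htrans
    have hQeq : (∑ i, μB i * ‖bB.repr x i‖ ^ 2) = ∑ i, μA i * ‖bA.repr v i‖ ^ 2 :=
      Complex.ofReal_inj.mp htrans
    have hboundA : ∀ i ∈ SA, sortedEig hA k ≤ μA i := by
      intro i hi
      obtain ⟨j, hj, rfl⟩ := Finset.mem_image.mp hi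
      exact Tuple.monotone_sort μA (Finset.mem_Ici.mp hj)
    have hboundB : ∀ i ∈ SB, μB i ≤ sortedEig hB k.succ := by
      intro i hi
      obtain ⟨j, hj, rfl⟩ := Finset.mem_image.mp hi
      exact Tuple.monotone_sort μB (Finset.mem_Iic.mp hj)
    have hlow := quad_lower bA μA hboundA hv
    have hup := quad_upper bB μB hboundB hxU
    have hnorm : ‖x‖ = ‖v‖ := by rw [← hvx, padL_norm]
    have hfinal : sortedEig hA k * ‖v‖ ^ 2 ≤ sortedEig hB k.succ * ‖v‖ ^ 2 := by
      calc sortedEig hA k * ‖v‖ ^ 2 ≤ ∑ i, μA i * ‖bA.repr v i‖ ^ 2 := hlow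
        _ = ∑ i, μB i * ‖bB.repr x i‖ ^ 2 := hQeq.symm
        _ ≤ sortedEig hB k.succ * ‖x‖ ^ 2 := hup
        _ = sortedEig hB k.succ * ‖v‖ ^ 2 := by rw [hnorm]
    exact le_of_mul_le_mul_right hfinal (pow_pos (norm_pos_iff.mpr hv0) 2)
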